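/- If H is a subgraph of the bunkbed graph and H contains a directed path from u^- to v^-, where every undirected path in G from u to v meets the post set P(H), and F is the set of edges of G reachable from v in the underlying undirected graph without passing through a vertex of P(H), then M(H,F) contains a directed path from u^- to v^+. (That is, mirroring across the reachable component of v flips the endpoint's bunk when the posts form an undirected cut-set.) -/

import Mathlib

/-- Edges of the bunkbed graph of a directed graph on vertex type `V`:
`horiz u v ε` is the copy of the directed edge `(u,v)` in bunk `ε`
(`false` = lower bunk `-`, `true` = upper bunk `+`); `vert w` is the
bidirected vertical edge `(w⁻, w⁺)`. -/
inductive BBEdge (V : Type) : Type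
  | horiz : V → V → Bool → BBEdge V
  | vert  : V → BBEdge V
deriving DecidableEq

/-- The `F`-mirroring map on single edges: vertical edges are fixed, a horizontal
edge whose shadow lies in `F` is sent to its mirrored copy in the other bunk, and
horizontal edges with shadow outside `F` are fixed. -/
def mir {V : Type} [DecidableEq V] (F : Finset (V × V)) : BBEdge V → BBEdge V
  | .horiz u v ε => if (u, v) ∈ F then .horiz u v (!ε) else .horiz u v ε
  | .vert w => .vert w

/-- The `F`-mirrored subgraph `M(H,F)`. -/
def M {V : Type} [DecidableEq V] (H : Finset (BBEdge V)) (F : Finset (V × V)) :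
    Finset (BBEdge V) :=
  H.image (mir F)
/-- The edge set of the bunkbed graph of the directed graph with vertex set `Vs`
and edge set `E`: the vertical edges at all vertices together with the two
horizontal copies of each edge. -/
def bbEdges {V : Type} [DecidableEq V] (Vs : Finset V) (E : Finset (V × V)) :
    Finset (BBEdge V) :=
  Vs.image BBEdge.vert ∪ E.image (fun p => BBEdge.horiz p.1 p.2 false) ∪
    E.image (fun p => BBEdge.horiz p.1 p.2 true)
/-- The set of posts of a subgraph `H` of the bunkbed graph: vertices whose
vertical edge belongs to `H`. -/
def posts {V : Type} [DecidableEq V] (H : Finset (BBEdge V)) : Set V :=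
  {w | BBEdge.vert w ∈ H}

/-- One step of directed traversal in a subgraph `H` of the bunkbed graph:
horizontal edges are used in their direction within a bunk, and vertical edges
may be traversed in both directions. Vertices of the bunkbed graph are pairs
`(w, ε)` with `ε : Bool` the bunk label (`false` = `-`, `true` = `+`). -/
def bbStep {V : Type} [DecidableEq V] (H : Finset (BBEdge V)) :
    V × Bool → V × Bool → Prop := fun a b =>
  (a.1 = b.1 ∧ a.2 ≠ b.2 ∧ BBEdge.vert a.1 ∈ H) ∨
    (a.2 = b.2 ∧ BBEdge.horiz a.1 b.1 a.2 ∈ H)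

/-- Directed reachability `x → y` in a subgraph of the bunkbed graph. -/
def bbReach {V : Type} [DecidableEq V] (H : Finset (BBEdge V))
    (a b : V × Bool) : Prop :=
  Relation.ReflTransGen (bbStep H) a b

/-- if `H` contains a directed path from `u⁻` to `v⁻`, every undirected
path in `G` from `u` to `v` meets the post set `P(H)` (expressed: there is no
undirected walk from `u` to `v` all of whose vertices avoid `P(H)`), and `F = R(P(H))`
is the set of edges of `G` with an endpoint reachable from `v` in the underlying
undirected graph without passing through a vertex of `P(H)`, then `M(H,F)` contains
a directed path from `u⁻` to `v⁺`. -/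
theorem mirror_flips_bunk {V : Type} [DecidableEq V]
    (Vs : Finset V) (E : Finset (V × V)) (u v : V)
    (H : Finset (BBEdge V)) (hH : H ⊆ bbEdges Vs E)
    (hcut : ¬ Relation.ReflTransGen
      (fun x y => ((x, y) ∈ E ∨ (y, x) ∈ E) ∧ x ∉ posts H ∧ y ∉ posts H) u v)
    (hpath : bbReach H (u, false) (v, false))
    (F : Finset (V × V))
    (hF : ∀ e : V × V, e ∈ F ↔ e ∈ E ∧
      ((Relation.ReflTransGen
          (fun x y => ((x, y) ∈ E ∨ (y, x) ∈ E) ∧ x ∉ posts H ∧ y ∉ posts H) v e.1 ∧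
          e.1 ∉ posts H) ∨
       (Relation.ReflTransGen
          (fun x y => ((x, y) ∈ E ∨ (y, x) ∈ E) ∧ x ∉ posts H ∧ y ∉ posts H) v e.2 ∧
          e.2 ∉ posts H))) :
    bbReach (M H F) (u, false) (v, true) := by
  classical
  set r : V → V → Prop := fun x y =>
    ((x, y) ∈ E ∨ (y, x) ∈ E) ∧ x ∉ posts H ∧ y ∉ posts H with hr
  have rsymm : Symmetric r := fun x y h => ⟨h.1.symm, h.2.2, h.2.1⟩
  set c : V → Prop := fun w => Relation.ReflTransGen r v w ∧ w ∉ posts H with hc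
  let φ : V × Bool → V × Bool := fun a => if c a.1 then (a.1, !a.2) else a
  have hvertM : ∀ w, BBEdge.vert w ∈ H → BBEdge.vert w ∈ M H F := fun w h =>
    Finset.mem_image.mpr ⟨_, h, rfl⟩
  have hhorizE : ∀ p q (ε : Bool), BBEdge.horiz p q ε ∈ H → (p, q) ∈ E := by
    intro p q ε h
    have := hH h
    simp only [bbEdges, Finset.mem_union, Finset.mem_image] at this
    rcases this with (⟨w, _, hw⟩ | ⟨a, ha, hab⟩) | ⟨a, ha, hab⟩
    · exact absurd hw (by simp)
    · cases hab; exact ha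
    · cases hab; exact ha
  have hFc : ∀ p q, (p, q) ∈ F ↔ (p, q) ∈ E ∧ (c p ∨ c q) := fun p q => hF (p, q)
  have hMhoriz : ∀ p q (ε : Bool), BBEdge.horiz p q ε ∈ H → (p, q) ∈ F →
      BBEdge.horiz p q (!ε) ∈ M H F := by
    intro p q ε h hpq
    exact Finset.mem_image.mpr ⟨_, h, by simp [mir, hpq]⟩
  have hMhoriz' : ∀ p q (ε : Bool), BBEdge.horiz p q ε ∈ H → (p, q) ∉ F →
      BBEdge.horiz p q ε ∈ M H F := by
    intro p q ε h hpq
    exact Finset.mem_image.mpr ⟨_, h, by simp [mir, hpq]⟩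
  have key : ∀ a b : V × Bool, bbStep H a b → bbReach (M H F) (φ a) (φ b) := by
    rintro ⟨p, ε⟩ ⟨q, δ⟩ (⟨h1, h2, h3⟩ | ⟨h1, h2⟩)
    · -- vertical step
      simp only at h1 h2 h3
      subst h1
      have hcp : ¬ c p := fun hcp => hcp.2 h3
      simp only [φ, if_neg hcp]
      exact Relation.ReflTransGen.single (Or.inl ⟨rfl, h2, hvertM p h3⟩)
    · -- horizontal step
      simp only at h1 h2
      subst h1
      have hE : (p, q) ∈ E := hhorizE p q ε h2
      by_cases hpq : (p, q) ∈ F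
      · have hM1 := hMhoriz p q ε h2 hpq
        have hcpq : c p ∨ c q := ((hFc p q).mp hpq).2
        by_cases hcp : c p <;> by_cases hcq : c q
        · simp only [φ, if_pos hcp, if_pos hcq]
          exact Relation.ReflTransGen.single (Or.inr ⟨rfl, hM1⟩)
        · -- c p, ¬ c q : q must be a post
          have hqP : q ∈ posts H := by
            by_contra hq
            exact hcq ⟨hcp.1.tail (show r p q from ⟨Or.inl hE, hcp.2, hq⟩), hq⟩
          simp only [φ, if_pos hcp, if_neg hcq]
          exact Relation.ReflTransGen.tail
            (Relation.ReflTransGen.single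
              (show bbStep (M H F) (p, !ε) (q, !ε) from Or.inr ⟨rfl, hM1⟩))
            (show bbStep (M H F) (q, !ε) (q, ε) from Or.inl ⟨rfl, by simp, hvertM q hqP⟩)
        · -- ¬ c p, c q : p must be a post
          have hpP : p ∈ posts H := by
            by_contra hp
            exact hcp ⟨hcq.1.tail (show r q p from ⟨Or.inr hE, hcq.2, hp⟩), hp⟩
          simp only [φ, if_neg hcp, if_pos hcq]
          exact Relation.ReflTransGen.tail
            (Relation.ReflTransGen.single
              (show bbStep (M H F) (p, ε) (p, !ε) from Or.inl ⟨rfl, by simp, hvertM p hpP⟩))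
            (show bbStep (M H F) (p, !ε) (q, !ε) from Or.inr ⟨rfl, hM1⟩)
        · exact absurd hcpq (by tauto)
      · have hncpq : ¬ (c p ∨ c q) := fun h => hpq ((hFc p q).mpr ⟨hE, h⟩)
        push_neg at hncpq
        simp only [φ, if_neg hncpq.1, if_neg hncpq.2]
        exact Relation.ReflTransGen.single (Or.inr ⟨rfl, hMhoriz' p q ε h2 hpq⟩)
  have main : ∀ a b : V × Bool, bbReach H a b → bbReach (M H F) (φ a) (φ b) := by
    intro a b hab
    induction hab with
    | refl => exact Relation.ReflTransGen.refl
    | tail _ hstep ih => exact ih.trans (key _ _ hstep)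
  have hcu : ¬ c u := by
    rintro ⟨hreach, _⟩
    exact hcut (letI : Std.Symm r := ⟨rsymm⟩; Relation.ReflTransGen.symmetric.symm _ _ hreach)
  have h1 := main _ _ hpath
  simp only [φ, if_neg hcu] at h1
  by_cases hcv : c v
  · simpa [φ, if_pos hcv] using h1
  · simp only [φ, if_neg hcv] at h1
    have hvP : v ∈ posts H := by
      by_contra hv
      exact hcv ⟨Relation.ReflTransGen.refl, hv⟩
    exact h1.tail (Or.inl ⟨rfl, by simp, hvertM v hvP⟩)
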